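/- arXiv:2504.12210 — 2 statements merged into one kernel-verified Lean document; each statement's English description precedes it below -/
import Mathlib

section
/- Suppose Ē is nonempty and every e ∈ Ē has capacity C_e > 0. For F ⊆ E with Γ_F ≠ ∅, set C_F := min_{e∈Γ_F} C_e. Then max_{e∈Ē} t_e/C_e = max_{F⊆E : Γ_F≠∅} t_F/C_F. (This is the combinatorial core of Lemma 2: the per-link-based completion-time formula max_e κ t_e/C_e coincides with the category-based formula max_F κ t_F/C_F.) -/
open Finset

/-- The category `Γ_F` of underlay links: the underlay links traversed by the paths of the
overlay links in `F` and by no others, i.e. `(⋂_{x∈F} p(x)) \ (⋃_{x∈E\F} p(x))`. -/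
def category {E Ebar : Type*} (p : E → Finset Ebar) (F : Finset E) : Set Ebar :=
  (⋂ x ∈ (F : Set E), (p x : Set Ebar)) \ (⋃ x ∈ ((F : Set E))ᶜ, (p x : Set Ebar))

/-- The per-link load `t_e = Σ_{x : e ∈ p(x)} a(x)`. -/
def linkLoad {E Ebar : Type*} [Fintype E] [DecidableEq Ebar] (p : E → Finset Ebar) (a : E → ℝ) (e : Ebar) : ℝ :=
  ∑ x ∈ Finset.univ.filter (fun x => e ∈ p x), a x

/-- The per-category load `t_F = Σ_{x∈F} a(x)`. -/
def catLoad {E : Type*} (a : E → ℝ) (F : Finset E) : ℝ := ∑ x ∈ F, a x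

lemma mem_category_iff {E Ebar : Type*} (p : E → Finset Ebar) (F : Finset E) (e : Ebar) :
    e ∈ category p F ↔ (∀ x ∈ F, e ∈ p x) ∧ ∀ x, x ∉ F → e ∉ p x := by
  simp [category, Set.mem_diff, Set.mem_iInter, Set.mem_iUnion]

/-- The per-link maximum `max_{e∈Ē} t_e/C_e` coincides with the category-based maximum
`max_{F : Γ_F ≠ ∅} t_F/C_F`, where `C_F = min_{e∈Γ_F} C_e`. -/
theorem max_per_link_eq_max_per_category
    {E Ebar : Type*} [Fintype E] [Fintype Ebar] [DecidableEq E] [DecidableEq Ebar] [Nonempty Ebar]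
    (p : E → Finset Ebar) (a : E → ℝ) (ha : ∀ x, 0 ≤ a x)
    (C : Ebar → ℝ) (hC : ∀ e, 0 < C e) :
    sSup {r : ℝ | ∃ e : Ebar, r = linkLoad p a e / C e} =
      sSup {r : ℝ | ∃ F : Finset E, (category p F).Nonempty ∧
        r = catLoad a F / sInf (C '' category p F)} := by
  set S : Set ℝ := {r : ℝ | ∃ e : Ebar, r = linkLoad p a e / C e} with hS
  set T : Set ℝ := {r : ℝ | ∃ F : Finset E, (category p F).Nonempty ∧
        r = catLoad a F / sInf (C '' category p F)} with hT
  -- T ⊆ S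
  have hTS : T ⊆ S := by
    rintro r ⟨F, hFne, rfl⟩
    have hfin : (C '' category p F).Finite := (Set.toFinite _).image _
    have hne : (C '' category p F).Nonempty := hFne.image _
    obtain ⟨e1, he1, hCe1⟩ := (hne.csInf_mem hfin : sInf (C '' category p F) ∈ C '' category p F)
    refine ⟨e1, ?_⟩
    have hfilt : Finset.univ.filter (fun x => e1 ∈ p x) = F := by
      ext x
      simp only [Finset.mem_filter, Finset.mem_univ, true_and]
      rw [mem_category_iff] at he1
      constructor
      · intro hx
        by_contra hxF
        exact he1.2 x hxF hx
      · exact he1.1 x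
    rw [hCe1, linkLoad, hfilt, catLoad]
  have hSfin : S.Finite := by
    have : S = Set.range (fun e : Ebar => linkLoad p a e / C e) := by
      ext r; simp [hS, eq_comm]
    rw [this]; exact Set.finite_range _
  have hSne : S.Nonempty := ⟨_, Classical.arbitrary Ebar, rfl⟩
  have hSbdd : BddAbove S := hSfin.bddAbove
  have hTne : T.Nonempty := by
    obtain ⟨e⟩ := (inferInstance : Nonempty Ebar)
    refine ⟨_, Finset.univ.filter (fun x => e ∈ p x), ⟨e, ?_⟩, rfl⟩
    rw [mem_category_iff]
    constructor
    · intro x hx; exact (Finset.mem_filter.mp hx).2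
    · intro x hx hpx; exact hx (Finset.mem_filter.mpr ⟨Finset.mem_univ _, hpx⟩)
  apply le_antisymm
  · -- each element of S is ≤ some element of T
    apply csSup_le hSne
    rintro r ⟨e, rfl⟩
    set F := Finset.univ.filter (fun x => e ∈ p x) with hF
    have heF : e ∈ category p F := by
      rw [mem_category_iff]
      constructor
      · intro x hx; exact (Finset.mem_filter.mp hx).2
      · intro x hx hpx; exact hx (Finset.mem_filter.mpr ⟨Finset.mem_univ _, hpx⟩)
    have hFne : (category p F).Nonempty := ⟨e, heF⟩
    have hfin : (C '' category p F).Finite := (Set.toFinite _).image _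
    have hne : (C '' category p F).Nonempty := hFne.image _
    have hinf_mem := hne.csInf_mem hfin
    obtain ⟨e1, he1, hCe1⟩ := hinf_mem
    have hinf_pos : 0 < sInf (C '' category p F) := hCe1 ▸ hC e1
    have hinf_le : sInf (C '' category p F) ≤ C e :=
      csInf_le hfin.bddBelow ⟨e, heF, rfl⟩
    have hload : linkLoad p a e = catLoad a F := rfl
    have hnn : 0 ≤ linkLoad p a e := Finset.sum_nonneg fun x _ => ha x
    calc linkLoad p a e / C e ≤ linkLoad p a e / sInf (C '' category p F) :=
          div_le_div_of_nonneg_left hnn hinf_pos hinf_le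
      _ ≤ sSup T := le_csSup (hSfin.subset hTS).bddAbove ⟨F, hFne, by rw [hload]⟩
  · exact csSup_le_csSup hSbdd hTne hTS
end

section
/- Consider the Frank-Wolfe iterates of the FMMD algorithm: W^{(0)} := I, and for k = 0, 1, …, T−1, W^{(k+1)} := (k/(k+2))·W^{(k)} + (2/(k+2))·S^{(k+1)}, where each S^{(k+1)} is an arbitrary atom in S⁺. Then for any T ≥ 0, the number of index pairs (i,j) with 1 ≤ i < j ≤ m and W^{(T)}_{ij} ≠ 0 is at most T; i.e., the mixing matrix produced after T iterations activates at most T overlay links. -/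
open Matrix Finset

/-- The swapping matrix `S^{(i,j)}`: the permutation matrix of the transposition of `i` and `j`. -/
def swapMat (m : ℕ) (i j : Fin m) : Matrix (Fin m) (Fin m) ℝ :=
  Matrix.of fun k l =>
    if (k = i ∧ l = j) ∨ (k = j ∧ l = i) ∨ (k = l ∧ k ≠ i ∧ k ≠ j) then 1 else 0

/-- The atom set `S⁺`: the identity matrix together with all swapping matrices. -/
def Splus (m : ℕ) : Set (Matrix (Fin m) (Fin m) ℝ) :=
  {1} ∪ {A | ∃ i j : Fin m, i < j ∧ A = swapMat m i j}

/-- The index pairs `(i,j)` with `i < j`. -/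
def pairs (m : ℕ) : Finset (Fin m × Fin m) :=
  Finset.univ.filter fun p => p.1 < p.2

/-- The matrix `J = (1/m) 𝟙 𝟙ᵀ`, with all entries `1/m`. -/
noncomputable def Jmat (m : ℕ) : Matrix (Fin m) (Fin m) ℝ :=
  Matrix.of fun _ _ => 1 / (m : ℝ)

/-- The spectral norm (ℓ²→ℓ² operator norm) of a real matrix. -/
noncomputable def specNorm {m : ℕ} (A : Matrix (Fin m) (Fin m) ℝ) : ℝ :=
  ‖Matrix.toEuclideanCLM (𝕜 := ℝ) A‖

/-- After `T` Frank-Wolfe iterations of FMMD (starting from `W⁽⁰⁾ = I`, each step taking a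
convex combination with an atom of `S⁺`), the resulting mixing matrix activates at most `T`
overlay links, i.e., at most `T` pairs `(i,j)` with `i < j` have a nonzero entry. -/
theorem fmmd_activates_at_most_T_links (m T : ℕ) (hm : 2 ≤ m)
    (S : ℕ → Matrix (Fin m) (Fin m) ℝ) (hS : ∀ k, S (k + 1) ∈ Splus m)
    (W : ℕ → Matrix (Fin m) (Fin m) ℝ) (hW0 : W 0 = 1)
    (hWk : ∀ k < T, W (k + 1)
      = ((k : ℝ) / ((k : ℝ) + 2)) • W k + (2 / ((k : ℝ) + 2)) • S (k + 1)) :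
    {p : Fin m × Fin m | p.1 < p.2 ∧ W T p.1 p.2 ≠ 0}.ncard ≤ T := by
  induction T with
  | zero =>
    have : {p : Fin m × Fin m | p.1 < p.2 ∧ W 0 p.1 p.2 ≠ 0} = ∅ := by
      ext p
      simp only [Set.mem_setOf_eq, Set.mem_empty_iff_false, iff_false, not_and, hW0]
      intro hlt h
      exact h (Matrix.one_apply_ne (ne_of_lt hlt))
    rw [this, Set.ncard_empty]
  | succ T ih =>
    have hWT := hWk T (Nat.lt_succ_self T)
    have key : {p : Fin m × Fin m | p.1 < p.2 ∧ W (T + 1) p.1 p.2 ≠ 0} ⊆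
        {p : Fin m × Fin m | p.1 < p.2 ∧ W T p.1 p.2 ≠ 0} ∪
        {p : Fin m × Fin m | p.1 < p.2 ∧ S (T + 1) p.1 p.2 ≠ 0} := by
      intro p hp
      obtain ⟨hlt, hne⟩ := hp
      rw [hWT] at hne
      simp only [Matrix.add_apply, Matrix.smul_apply, smul_eq_mul] at hne
      by_cases h1 : W T p.1 p.2 = 0
      · right
        refine ⟨hlt, fun h2 => ?_⟩
        rw [h1, h2] at hne
        simp at hne
      · exact Or.inl ⟨hlt, h1⟩
    have hsmall : {p : Fin m × Fin m | p.1 < p.2 ∧ S (T + 1) p.1 p.2 ≠ 0}.ncard ≤ 1 := by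
      rcases hS T with h1 | ⟨i, j, hij, hswap⟩
      · have : {p : Fin m × Fin m | p.1 < p.2 ∧ S (T + 1) p.1 p.2 ≠ 0} = ∅ := by
          ext p
          simp only [Set.mem_setOf_eq, Set.mem_empty_iff_false, iff_false, not_and]
          intro hlt h
          rw [Set.mem_singleton_iff.mp h1] at h
          exact h (Matrix.one_apply_ne (ne_of_lt hlt))
        rw [this, Set.ncard_empty]; omega
      · have : {p : Fin m × Fin m | p.1 < p.2 ∧ S (T + 1) p.1 p.2 ≠ 0} ⊆ {(i, j)} := by
          intro p hp
          obtain ⟨hlt, hne⟩ := hp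
          rw [hswap] at hne
          simp only [swapMat, Matrix.of_apply] at hne
          by_cases hc : (p.1 = i ∧ p.2 = j) ∨ (p.1 = j ∧ p.2 = i) ∨ (p.1 = p.2 ∧ p.1 ≠ i ∧ p.1 ≠ j)
          · rcases hc with ⟨h1, h2⟩ | ⟨h1, h2⟩ | ⟨h1, _⟩
            · simp [Set.mem_singleton_iff, Prod.ext_iff, h1, h2]
            · exact absurd (h2 ▸ h1 ▸ hlt) (not_lt.mpr (le_of_lt hij))
            · exact absurd (h1 ▸ hlt) (lt_irrefl _)
          · rw [if_neg hc] at hne; exact absurd rfl hne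
        calc _ ≤ ({(i, j)} : Set (Fin m × Fin m)).ncard :=
              Set.ncard_le_ncard this (Set.finite_singleton _)
          _ = 1 := Set.ncard_singleton _
    calc {p : Fin m × Fin m | p.1 < p.2 ∧ W (T + 1) p.1 p.2 ≠ 0}.ncard
        ≤ ({p : Fin m × Fin m | p.1 < p.2 ∧ W T p.1 p.2 ≠ 0} ∪
           {p : Fin m × Fin m | p.1 < p.2 ∧ S (T + 1) p.1 p.2 ≠ 0}).ncard :=
          Set.ncard_le_ncard key (Set.toFinite _)
      _ ≤ _ + _ := Set.ncard_union_le _ _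
      _ ≤ T + 1 := by
          have := ih (fun k hk => hWk k (Nat.lt_succ_of_lt hk))
          omega
end
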